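/- Suppose F is a k-wise intersecting family of r-subsets of [n] with r < (k-1)n/k and |F| ≥ (1-δ) C(n-1, r-1). Then the number of cyclic orders σ on [n] for which fewer than r members of F are σ-intervals is at most r δ (n-1)!. -/

import Mathlib

open scoped Classical

/-- Two bijections `ZMod n ≃ Fin n` define the same cyclic order on `[n]` iff they
differ by a rotation of positions. -/
def rotSetoid (n : ℕ) : Setoid (ZMod n ≃ Fin n) where
  r σ τ := ∃ c : ZMod n, ∀ x, σ x = τ (x + c)
  iseqv := by
    refine ⟨fun σ => ⟨0, fun x => by rw [add_zero]⟩, ?_, ?_⟩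
    · rintro σ τ ⟨c, h⟩
      refine ⟨-c, fun x => ?_⟩
      rw [h (x + -c), add_assoc, neg_add_cancel, add_zero]
    · rintro σ τ ρ ⟨c, h⟩ ⟨d, h'⟩
      exact ⟨c + d, fun x => by rw [h, h', add_assoc]⟩

/-- The `σ`-interval of length `r` starting at position `x`. -/
def cInterval (n r : ℕ) (σ : ZMod n ≃ Fin n) (x : ZMod n) : Finset (Fin n) :=
  (Finset.range r).image (fun (i : ℕ) => σ (x + (i : ZMod n)))

/-- The number of members of `F` that are intervals in the cyclic order `q`. -/
noncomputable def intervalCount (n r : ℕ) (F : Finset (Finset (Fin n))) (q : Quotient (rotSetoid n)) : ℕ :=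
  Nat.card {A : Finset (Fin n) // A ∈ F ∧
    ∃ σ : ZMod n ≃ Fin n, Quotient.mk (rotSetoid n) σ = q ∧
      ∃ x : ZMod n, A = cInterval n r σ x}

section Aux

open Finset

/-- Core combinatorial lemma (Frankl's circle lemma, in start-set form). -/
lemma core_circle (n r L k : ℕ) (hn : 0 < n) (hr1 : 1 ≤ r) (hrL : r + L = n)
    (hk : 2 ≤ k) (hkL : n + 1 ≤ k * L) (S : Finset (ZMod n))
    (hS : ∀ f : Fin k → ZMod n, (∀ i, f i ∈ S) → ∃ w : ZMod n, ∀ i, (w - f i).val < r) :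
    S.card ≤ r := by
  haveI : NeZero n := ⟨hn.ne'⟩
  by_contra hcard
  push_neg at hcard
  have hSn : S.card ≤ n := by
    have := S.card_le_univ
    simpa [ZMod.card] using this
  have hL1 : 1 ≤ L := by
    rcases Nat.eq_zero_or_pos L with h | h
    · rw [h, Nat.mul_zero] at hkL; omega
    · exact h
  have hLn : L < n := by omega
  set E : ℕ := n - S.card with hE
  have hEL : E + 1 ≤ L := by omega
  -- existence of a nearby element of S below any integer
  have hex : ∀ x : ℤ, ∃ d : ℕ, d ≤ E ∧ ((x - d : ℤ) : ZMod n) ∈ S := by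
    intro x
    by_contra hcon
    push_neg at hcon
    have hmaps : ∀ i : Fin (E + 1), ((x - (i : ℕ) : ℤ) : ZMod n) ∈ Sᶜ := by
      intro i
      simp only [Finset.mem_compl]
      exact hcon i (by omega)
    have hinj : Set.InjOn (fun i : Fin (E + 1) => ((x - (i : ℕ) : ℤ) : ZMod n)) ((Finset.univ : Finset (Fin (E + 1))) : Set (Fin (E + 1))) := by
      intro i _ j _ hij
      simp only at hij
      have h1 : ((i : ℕ) : ZMod n) = ((j : ℕ) : ZMod n) := by
        push_cast at hij
        exact sub_right_injective hij
      have h2 : ((i : ℕ) : ZMod n).val = ((j : ℕ) : ZMod n).val := by rw [h1]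
      rw [ZMod.val_cast_of_lt (by omega), ZMod.val_cast_of_lt (by omega)] at h2
      exact Fin.ext h2
    have hle := Finset.card_le_card_of_injOn _ (fun a _ => hmaps a) hinj
    rw [Finset.card_univ, Fintype.card_fin, Finset.card_compl, ZMod.card] at hle
    omega
  have hexP : ∀ x : ℤ, ∃ d : ℕ, ((x - d : ℤ) : ZMod n) ∈ S := fun x => ⟨(hex x).choose, (hex x).choose_spec.2⟩
  set dfun : ℤ → ℕ := fun x => Nat.find (hexP x) with hdfun
  have hdfun_le : ∀ x, dfun x ≤ E := by
    intro x
    obtain ⟨dd, hdE, hdS⟩ := hex x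
    exact le_trans (Nat.find_min' (hexP x) hdS) hdE
  have hdfun_spec : ∀ x : ℤ, ((x - dfun x : ℤ) : ZMod n) ∈ S := fun x => Nat.find_spec (hexP x)
  have hdfun_min : ∀ x : ℤ, ∀ d : ℕ, d < dfun x → ((x - d : ℤ) : ZMod n) ∉ S :=
    fun x d hd => Nat.find_min (hexP x) hd
  have hdfun_congr : ∀ x y : ℤ, (x : ZMod n) = (y : ZMod n) → dfun x = dfun y := by
    intro x y hxy
    have hiff : ∀ d : ℕ, (((x - d : ℤ) : ZMod n) ∈ S) ↔ (((y - d : ℤ) : ZMod n) ∈ S) := by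
      intro d
      have : ((x - d : ℤ) : ZMod n) = ((y - d : ℤ) : ZMod n) := by
        push_cast
        rw [hxy]
      rw [this]
    exact le_antisymm (Nat.find_min' _ ((hiff _).mpr (Nat.find_spec (hexP y))))
      (Nat.find_min' _ ((hiff _).mp (Nat.find_spec (hexP x))))
  set Ffun : ℤ → ℤ := fun x => (x + L) - dfun (x + L) with hFfun
  have hF_memS : ∀ x : ℤ, ((Ffun x : ℤ) : ZMod n) ∈ S := fun x => hdfun_spec (x + L)
  have hF_le : ∀ x : ℤ, Ffun x ≤ x + L := by
    intro x
    have : (0:ℤ) ≤ (dfun (x + L) : ℤ) := Int.natCast_nonneg _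
    simp only [hFfun]
    omega
  have hF_ge : ∀ x : ℤ, x + 1 ≤ Ffun x := by
    intro x
    have h1 := hdfun_le (x + L)
    simp only [hFfun]
    omega
  have hF_mono : Monotone Ffun := by
    intro x y hxy
    have h1 : (0:ℤ) ≤ y + L - Ffun x := by have := hF_le x; omega
    have h2 : (((y + L - Ffun x).toNat : ℕ) : ℤ) = y + L - Ffun x := Int.toNat_of_nonneg h1
    have hcand : ((y + L - ((y + L - Ffun x).toNat : ℕ) : ℤ) : ZMod n) ∈ S := by
      rw [h2]
      have : y + (L:ℤ) - (y + L - Ffun x) = Ffun x := by ring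
      rw [this]
      exact hF_memS x
    have h3 := Nat.find_min' (hexP (y + L)) hcand
    have h4 : (dfun (y + L) : ℤ) ≤ ((y + L - Ffun x).toNat : ℕ) := by exact_mod_cast h3
    simp only [hFfun] at *
    omega
  have hF_per : ∀ x : ℤ, Ffun (x + n) = Ffun x + n := by
    intro x
    have hc : dfun (x + (L:ℤ) + n) = dfun (x + L) := by
      apply hdfun_congr
      push_cast
      rw [ZMod.natCast_self]
      ring
    simp only [hFfun]
    rw [show x + (n:ℤ) + (L:ℤ) = x + (L:ℤ) + n by ring, hc]
    ring
  have hF_perW : ∀ (W : ℕ) (x : ℤ), Ffun (x + W * n) = Ffun x + W * n := by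
    intro W
    induction W with
    | zero => simp
    | succ w ih =>
      intro x
      have : x + ((w:ℤ)+1) * n = (x + w * n) + n := by ring
      push_cast
      rw [this, hF_per, ih]
      ring
  have hIter_ge : ∀ (j : ℕ) (x : ℤ), x + j ≤ Ffun^[j] x := by
    intro j
    induction j with
    | zero => simp
    | succ m ih =>
      intro x
      rw [Function.iterate_succ_apply']
      have h1 := hF_ge (Ffun^[m] x)
      have h2 := ih x
      push_cast
      omega
  have hIter_le : ∀ (j : ℕ) (x : ℤ), Ffun^[j] x ≤ x + j * L := by
    intro j
    induction j with
    | zero => simp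
    | succ m ih =>
      intro x
      rw [Function.iterate_succ_apply']
      have h1 := hF_le (Ffun^[m] x)
      have h2 := ih x
      push_cast
      push_cast at h2
      nlinarith
  have hIter_per : ∀ (j W : ℕ) (x : ℤ), Ffun^[j] (x + W * n) = Ffun^[j] x + W * n := by
    intro j W
    induction j with
    | zero => simp
    | succ m ih =>
      intro x
      rw [Function.iterate_succ_apply', Function.iterate_succ_apply', ih, hF_perW]
  have hIter_memS : ∀ (j : ℕ) (x : ℤ), 1 ≤ j → ((Ffun^[j] x : ℤ) : ZMod n) ∈ S := by
    intro j x hj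
    obtain ⟨m, rfl⟩ : ∃ m, j = m + 1 := ⟨j - 1, by omega⟩
    rw [Function.iterate_succ_apply']
    exact hF_memS _
  by_cases hcase : ∃ p : ℤ, ((p : ZMod n) ∈ S) ∧ p + r ≤ Ffun^[k-1] p
  · -- Case 1: a selection exists; contradict hS
    obtain ⟨p, hpS, hpF⟩ := hcase
    have hj0ex : ∃ j, p + r ≤ Ffun^[j] p := ⟨k - 1, hpF⟩
    set j₀ := Nat.find hj0ex with hj0
    have hj₀le : j₀ ≤ k - 1 := Nat.find_min' hj0ex hpF
    have hj₀spec : p + r ≤ Ffun^[j₀] p := Nat.find_spec hj0ex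
    have hj₀pos : 1 ≤ j₀ := by
      by_contra h
      push_neg at h
      have h0 : j₀ = 0 := by omega
      rw [h0] at hj₀spec
      simp at hj₀spec
      omega
    set f : Fin k → ZMod n := fun i => ((Ffun^[min (i:ℕ) j₀] p : ℤ) : ZMod n) with hf
    have hfS : ∀ i, f i ∈ S := by
      intro i
      rcases Nat.eq_zero_or_pos (min (i:ℕ) j₀) with h | h
      · simp only [hf, h, Function.iterate_zero_apply]
        exact hpS
      · exact hIter_memS _ _ h
    obtain ⟨w, hw⟩ := hS f hfS
    have hk0 : 0 < k := by omega
    have hm : (w - (p : ZMod n)).val < r := by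
      have h0 := hw ⟨0, hk0⟩
      have hfeq : f ⟨0, hk0⟩ = (p : ZMod n) := by
        simp only [hf]
        norm_num
      rwa [hfeq] at h0
    set m : ℕ := (w - (p : ZMod n)).val with hmdef
    have hmr : m < r := hm
    set c₀ : ℤ := p + m + 1 with hc₀
    have hc₀r : c₀ ≤ p + r := by simp only [hc₀]; push_cast; omega
    have hi0ex : ∃ i, c₀ ≤ Ffun^[i] p := ⟨j₀, le_trans hc₀r hj₀spec⟩
    set i₀ := Nat.find hi0ex with hi0
    have hi₀spec : c₀ ≤ Ffun^[i₀] p := Nat.find_spec hi0ex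
    have hi₀le : i₀ ≤ j₀ := Nat.find_min' hi0ex (le_trans hc₀r hj₀spec)
    have hi₀pos : 1 ≤ i₀ := by
      by_contra h
      push_neg at h
      have h0 : i₀ = 0 := by omega
      rw [h0] at hi₀spec
      simp only [Function.iterate_zero_apply, hc₀] at hi₀spec
      have : (0:ℤ) ≤ (m:ℤ) := Int.natCast_nonneg _
      omega
    have hprev : Ffun^[i₀ - 1] p < c₀ := by
      by_contra hcon
      push_neg at hcon
      exact absurd hcon (Nat.find_min hi0ex (by omega))
    have hstep : Ffun^[i₀] p ≤ Ffun^[i₀ - 1] p + L := by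
      have h1 : i₀ = (i₀ - 1) + 1 := by omega
      rw [h1, Function.iterate_succ_apply']
      exact hF_le _
    set z : ℤ := Ffun^[i₀] p with hz
    have hzub : z ≤ c₀ + L - 1 := by omega
    set t : ℕ := (z - c₀).toNat with ht
    have htz : (t : ℤ) = z - c₀ := Int.toNat_of_nonneg (by omega)
    have htL : t + 1 ≤ L := by omega
    have hwp : ((m : ℕ) : ZMod n) = w - (p : ZMod n) := by
      rw [hmdef, ZMod.natCast_val, ZMod.cast_id]
    have hzres : ((z : ℤ) : ZMod n) = w + 1 + (t : ZMod n) := by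
      have hzeq : z = p + (m:ℤ) + 1 + (t:ℤ) := by omega
      rw [hzeq]
      push_cast
      rw [hwp]
      ring
    have hi₀k : i₀ < k := by omega
    have hzlt : (w - ((z : ℤ) : ZMod n)).val < r := by
      have h0 := hw ⟨i₀, hi₀k⟩
      have hfeq : f ⟨i₀, hi₀k⟩ = ((z : ℤ) : ZMod n) := by
        have hmin : min ((⟨i₀, hi₀k⟩ : Fin k) : ℕ) j₀ = i₀ := by
          simp [min_eq_left hi₀le]
        simp only [hf, hmin]
        rfl
      rwa [hfeq] at h0
    have hcontra : (w - ((z : ℤ) : ZMod n)).val = n - 1 - t := by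
      rw [hzres]
      have h1 : w - (w + 1 + (t : ZMod n)) = ((n - 1 - t : ℕ) : ZMod n) := by
        rw [Nat.cast_sub (by omega : t ≤ n - 1), Nat.cast_sub (by omega : 1 ≤ n)]
        rw [ZMod.natCast_self]
        push_cast
        ring
      rw [h1, ZMod.val_cast_of_lt (by omega)]
    omega
  · -- Case 2: no selection; derive |M| ≥ L
    push_neg at hcase
    have hFk : ∀ x : ℤ, Ffun^[k] x ≤ x + n - 1 := by
      intro x
      have h1 : Ffun^[k] x = Ffun^[k-1] (Ffun x) := by
        conv_lhs => rw [show k = (k-1) + 1 by omega]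
        rw [Function.iterate_succ_apply]
      have h2 := hcase (Ffun x) (hF_memS x)
      have h3 := hF_le x
      rw [h1]
      omega
    have hFkm : ∀ (m : ℕ) (x : ℤ), Ffun^[k * m] x ≤ x + m * ((n:ℤ) - 1) := by
      intro m
      induction m with
      | zero => simp
      | succ v ih =>
        intro x
        have h1 : k * (v + 1) = k + k * v := by ring
        rw [h1, Function.iterate_add_apply]
        have h2 := ih x
        have h3 := hFk (Ffun^[k * v] x)
        have h4 : ((v:ℤ) + 1) * ((n:ℤ) - 1) = v * ((n:ℤ) - 1) + (n - 1) := by ring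
        push_cast
        push_cast at h2
        linarith
    obtain ⟨s₀, hs₀⟩ : ∃ s, s ∈ S := Finset.card_pos.mp (by omega)
    set x₀ : ℤ := (s₀.val : ℤ) with hx₀
    set u : ℕ → ℤ := fun j => Ffun^[j] x₀ with hu
    have hustrict : ∀ i j : ℕ, i < j → u i + (j - i : ℕ) ≤ u j := by
      intro i j hij
      have h1 : u j = Ffun^[j - i] (u i) := by
        simp only [hu]
        rw [← Function.iterate_add_apply]
        congr 1
        omega
      have h2 := hIter_ge (j - i) (u i)
      omega
    have hnoninj : ¬ Function.Injective (fun j : Fin (n+1) => ((u (j:ℕ) : ℤ) : ZMod n)) := by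
      intro hinj
      have := Fintype.card_le_of_injective _ hinj
      simp only [Fintype.card_fin, ZMod.card] at this
      omega
    have hBex : ∃ b, ∃ a, a < b ∧ ((u a : ℤ) : ZMod n) = ((u b : ℤ) : ZMod n) := by
      by_contra hcon
      push_neg at hcon
      apply hnoninj
      intro a b hab
      by_contra hne
      simp only at hab
      rcases lt_or_gt_of_ne (show (a:ℕ) ≠ (b:ℕ) from fun h => hne (Fin.ext h)) with h | h
      · exact hcon b a h hab
      · exact hcon a b h hab.symm
    set b₀ := Nat.find hBex with hb₀
    obtain ⟨a₀, ha₀b, hres⟩ := Nat.find_spec hBex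
    have hdista : ∀ i j : ℕ, i < j → j < b₀ → ((u i : ℤ) : ZMod n) ≠ ((u j : ℤ) : ZMod n) := by
      intro i j hij hj hcon
      exact Nat.find_min hBex hj ⟨i, hij, hcon⟩
    have hdist : ∀ i j : ℕ, a₀ < i → i < j → j ≤ b₀ → ((u i : ℤ) : ZMod n) ≠ ((u j : ℤ) : ZMod n) := by
      intro i j hai hij hjb hcon
      rcases lt_or_eq_of_le hjb with hj | rfl
      · exact hdista i j hij hj hcon
      · exact hdista a₀ i hai (by omega) (hres.trans hcon.symm)
    set T := b₀ - a₀ with hT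
    have hT1 : 1 ≤ T := by omega
    have huT : u b₀ = Ffun^[T] (u a₀) := by
      simp only [hu]
      rw [← Function.iterate_add_apply]
      congr 1
      omega
    have hdvd : (n : ℤ) ∣ (u b₀ - u a₀) := by
      have h1 := (ZMod.intCast_eq_intCast_iff _ _ _).mp hres
      exact Int.ModEq.dvd h1
    obtain ⟨Wz, hWz⟩ := hdvd
    have hupos : u a₀ + 1 ≤ u b₀ := by
      have := hustrict a₀ b₀ (by omega)
      omega
    have hWzpos : 0 < Wz := by
      rcases lt_trichotomy Wz 0 with h | h | h
      · have : (n:ℤ) * Wz < 0 := mul_neg_of_pos_of_neg (by exact_mod_cast hn) h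
        omega
      · rw [h] at hWz; omega
      · exact h
    set W : ℕ := Wz.toNat with hW
    have hWzt : (W : ℤ) = Wz := Int.toNat_of_nonneg hWzpos.le
    have hWn : u b₀ = u a₀ + (W : ℤ) * n := by
      rw [hWzt]
      linarith [hWz, mul_comm (n:ℤ) Wz]
    have hW1 : 1 ≤ W := by
      have : (1:ℤ) ≤ W := by rw [hWzt]; omega
      exact_mod_cast this
    have hTkW : k * W + 1 ≤ T := by
      by_contra hcon
      push_neg at hcon
      have hTle : T ≤ k * W := by omega
      have hidx : (k*W - T) + T = k * W := by omega
      have h1 : Ffun^[(k*W - T) + T] (u a₀) = Ffun^[k*W - T] (Ffun^[T] (u a₀)) :=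
        Function.iterate_add_apply _ _ _ _
      have h2 : Ffun^[T] (u a₀) = u a₀ + (W:ℤ) * n := by rw [← huT]; exact hWn
      have h3 : Ffun^[k*W - T] (u a₀ + (W:ℤ) * n) = Ffun^[k*W - T] (u a₀) + W * n :=
        hIter_per _ _ _
      have h4 := hIter_ge (k*W - T) (u a₀)
      have h5 := hFkm W (u a₀)
      rw [hidx] at h1
      rw [h2, h3] at h1
      have hcast : ((k*W - T : ℕ) : ℤ) = (k:ℤ)*W - T := by
        push_cast [Nat.cast_sub hTle]
        ring
      rw [hcast] at h4
      have hexp : (W:ℤ) * ((n:ℤ) - 1) = W * n - W := by ring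
      have hWc : (1:ℤ) ≤ W := by exact_mod_cast hW1
      have hTc : (T:ℤ) ≤ (k:ℤ)*W := by exact_mod_cast hTle
      linarith [h1, h4, h5, hexp]
    set d : ℕ → ℕ := fun j => dfun (u (a₀ + j) + L) with hd
    have hdstep : ∀ j : ℕ, u (a₀ + j + 1) = u (a₀ + j) + L - d j := by
      intro j
      simp only [hu, hd]
      rw [show a₀ + j + 1 = (a₀ + j) + 1 from rfl, Function.iterate_succ_apply']
    have hdsum : (T : ℤ) * L = (W:ℤ) * n + ∑ j ∈ Finset.range T, (d j : ℤ) := by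
      have htel : ∑ j ∈ Finset.range T, ((fun j => u (a₀ + j)) (j+1) - (fun j => u (a₀ + j)) j)
          = u (a₀ + T) - u (a₀ + 0) := Finset.sum_range_sub (fun j => u (a₀ + j)) T
      simp only [add_zero] at htel
      have hcongr : ∀ j ∈ Finset.range T, ((fun j => u (a₀ + j)) (j+1) - (fun j => u (a₀ + j)) j)
          = (L:ℤ) - d j := by
        intro j _
        simp only []
        rw [show a₀ + (j + 1) = a₀ + j + 1 from rfl, hdstep j]
        ring
      rw [Finset.sum_congr rfl hcongr, Finset.sum_sub_distrib, Finset.sum_const,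
        Finset.card_range] at htel
      have hab : a₀ + T = b₀ := by omega
      rw [hab, hWn] at htel
      have : (T:ℤ) * L = T • (L:ℤ) := by simp [nsmul_eq_mul]
      rw [this]
      linarith [htel]
    have hnotS : ∀ j : ℕ, ∀ i : ℕ, 1 ≤ i → i ≤ d j → ((u (a₀+j+1) + i : ℤ) : ZMod n) ∉ S := by
      intro j i h1 h2
      have hc : ((d j - i : ℕ) : ℤ) = (d j : ℤ) - i := by
        push_cast [Nat.cast_sub h2]
        ring
      have heqpos : (u (a₀+j+1) + i : ℤ) = (u (a₀+j) + L) - ((d j - i : ℕ) : ℤ) := by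
        have h3 := hdstep j
        rw [hc]
        linarith
      rw [heqpos]
      apply hdfun_min
      have hdd : dfun (u (a₀+j) + L) = d j := rfl
      omega
    set D : ℕ → Finset (ZMod n) :=
      fun j => (Finset.Icc 1 (d j)).image (fun i : ℕ => ((u (a₀+j+1) + i : ℤ) : ZMod n)) with hD
    have hdE : ∀ j, d j ≤ E := fun j => hdfun_le _
    have hDcard : ∀ j, (D j).card = d j := by
      intro j
      simp only [hD]
      rw [Finset.card_image_of_injOn, Nat.card_Icc]
      · omega
      · intro i hi i' hi' hii
        simp only [Finset.coe_Icc, Set.mem_Icc] at hi hi'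
        simp only at hii
        have h1 : ((i : ℕ) : ZMod n) = ((i' : ℕ) : ZMod n) := by
          push_cast at hii
          exact add_left_cancel hii
        have h2 : ((i : ℕ) : ZMod n).val = ((i' : ℕ) : ZMod n).val := by rw [h1]
        rw [ZMod.val_cast_of_lt (by have := hdE j; omega),
          ZMod.val_cast_of_lt (by have := hdE j; omega)] at h2
        exact h2
    have hDsubS : ∀ j, D j ⊆ Sᶜ := by
      intro j z hz
      simp only [hD, Finset.mem_image, Finset.mem_Icc] at hz
      obtain ⟨i, ⟨h1, h2⟩, rfl⟩ := hz
      simp only [Finset.mem_compl]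
      exact hnotS j i h1 h2
    have hdrec : ∀ j i : ℕ, 1 ≤ i → i ≤ d j → dfun (u (a₀+j+1) + i) = i := by
      intro j i h1 h2
      simp only [hdfun]
      apply (Nat.find_eq_iff (hexP _)).mpr
      constructor
      · have : (u (a₀+j+1) + (i:ℤ) - i) = u (a₀+j+1) := by ring
        rw [this]
        exact hIter_memS _ _ (by omega)
      · intro mm hmm
        have hc : ((i - mm : ℕ) : ℤ) = (i:ℤ) - mm := by
          push_cast [Nat.cast_sub (by omega : mm ≤ i)]
          ring
        have : (u (a₀+j+1) + (i:ℤ) - mm) = u (a₀+j+1) + ((i - mm : ℕ) : ℤ) := by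
          rw [hc]
          ring
        rw [this]
        exact hnotS j (i - mm) (by omega) (by omega)
    have hDdisj : ∀ x ∈ Finset.range T, ∀ y ∈ Finset.range T, x ≠ y → Disjoint (D x) (D y) := by
      intro x hx y hy hxy
      rw [Finset.disjoint_left]
      intro z hzx hzy
      simp only [hD, Finset.mem_image, Finset.mem_Icc] at hzx hzy
      obtain ⟨i, ⟨hi1, hi2⟩, hiz⟩ := hzx
      obtain ⟨i', ⟨hi1', hi2'⟩, hiz'⟩ := hzy
      have heq : ((u (a₀+x+1) + i : ℤ) : ZMod n) = ((u (a₀+y+1) + i' : ℤ) : ZMod n) := by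
        rw [hiz, hiz']
      have hii : i = i' := by
        have hcongr := hdfun_congr _ _ heq
        rw [hdrec x i hi1 hi2, hdrec y i' hi1' hi2'] at hcongr
        exact hcongr
      subst hii
      have hur : ((u (a₀+x+1) : ℤ) : ZMod n) = ((u (a₀+y+1) : ℤ) : ZMod n) := by
        push_cast at heq
        exact add_right_cancel heq
      simp only [Finset.mem_range] at hx hy
      rcases lt_or_gt_of_ne hxy with h | h
      · exact hdist (a₀+x+1) (a₀+y+1) (by omega) (by omega) (by omega) hur
      · exact hdist (a₀+y+1) (a₀+x+1) (by omega) (by omega) (by omega) hur.symm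
    have hsumE : ∑ j ∈ Finset.range T, d j ≤ E := by
      calc ∑ j ∈ Finset.range T, d j = ∑ j ∈ Finset.range T, (D j).card := by
            exact Finset.sum_congr rfl (fun j _ => (hDcard j).symm)
        _ = ((Finset.range T).biUnion D).card := (Finset.card_biUnion hDdisj).symm
        _ ≤ Sᶜ.card := Finset.card_le_card (by
            intro z hz
            rw [Finset.mem_biUnion] at hz
            obtain ⟨j, _, hj⟩ := hz
            exact hDsubS j hj)
        _ = E := by rw [Finset.card_compl]; simp [ZMod.card, hE]
    have hfin1 : (T:ℤ) * L ≤ (W:ℤ) * n + E := by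
      rw [hdsum]
      have h1 : (∑ j ∈ Finset.range T, (d j : ℤ)) ≤ (E:ℤ) := by
        have := hsumE
        exact_mod_cast Nat.cast_le.mpr this
      linarith
    have hfin2 : ((k * W + 1 : ℕ) : ℤ) * L ≤ (T:ℤ) * L := by
      apply mul_le_mul_of_nonneg_right
      · exact_mod_cast hTkW
      · positivity
    have hfin3 : (W:ℤ) * ((n:ℤ) + 1) ≤ (W:ℤ) * ((k:ℤ) * L) := by
      apply mul_le_mul_of_nonneg_left
      · exact_mod_cast hkL
      · positivity
    have he1 : ((k * W + 1 : ℕ) : ℤ) * L = (W:ℤ) * ((k:ℤ) * L) + L := by push_cast; ring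
    have he2 : (W:ℤ) * ((n:ℤ) + 1) = (W:ℤ) * n + W := by ring
    have hWc : (1:ℤ) ≤ W := by exact_mod_cast hW1
    have hEc : (E:ℤ) + 1 ≤ L := by exact_mod_cast hEL
    linarith

end Aux

noncomputable instance rotQuotFintype (n : ℕ) [NeZero n] : Fintype (Quotient (rotSetoid n)) :=
  @Quotient.fintype (ZMod n ≃ Fin n) _ (rotSetoid n) (fun _ _ => Classical.propDecidable _)

lemma zmod_val_inj {n : ℕ} [NeZero n] {a b : ZMod n} (h : a.val = b.val) : a = b := by
  have ha : ((a.val : ℕ) : ZMod n) = a := by rw [ZMod.natCast_val, ZMod.cast_id]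
  have hb : ((b.val : ℕ) : ZMod n) = b := by rw [ZMod.natCast_val, ZMod.cast_id]
  rw [← ha, ← hb, h]

lemma cInterval_rot {n r : ℕ} (σ σ' : ZMod n ≃ Fin n) (c : ZMod n)
    (hc : ∀ y, σ' y = σ (y + c)) (x : ZMod n) :
    cInterval n r σ' x = cInterval n r σ (x + c) := by
  unfold cInterval
  apply Finset.image_congr
  intro i _
  show σ' (x + (i : ZMod n)) = σ (x + c + (i : ZMod n))
  rw [hc (x + (i : ZMod n))]
  congr 1
  ring

lemma cInterval_mem {n r : ℕ} [NeZero n] (hrn : r ≤ n) (σ : ZMod n ≃ Fin n) (x : ZMod n)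
    (v : Fin n) : v ∈ cInterval n r σ x ↔ (σ.symm v - x).val < r := by
  unfold cInterval
  rw [Finset.mem_image]
  constructor
  · rintro ⟨t, ht, rfl⟩
    rw [Finset.mem_range] at ht
    have h1 : σ.symm (σ (x + (t : ZMod n))) = x + (t : ZMod n) := σ.symm_apply_apply _
    rw [h1]
    have h2 : x + (t : ZMod n) - x = (t : ZMod n) := by ring
    rw [h2, ZMod.val_cast_of_lt (by omega)]
    exact ht
  · intro h
    refine ⟨(σ.symm v - x).val, Finset.mem_range.mpr h, ?_⟩
    have h1 : (((σ.symm v - x).val : ℕ) : ZMod n) = σ.symm v - x := by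
      rw [ZMod.natCast_val, ZMod.cast_id]
    rw [h1]
    have h2 : x + (σ.symm v - x) = σ.symm v := by ring
    rw [h2, σ.apply_symm_apply]

lemma cInterval_start_unique (n r : ℕ) [NeZero n] (hr1 : 1 ≤ r) (hrn : r < n)
    (σ : ZMod n ≃ Fin n) (c : ZMod n) (h : cInterval n r σ c = cInterval n r σ 0) :
    c = 0 := by
  have hn : 0 < n := by omega
  have hw : ∀ w : ZMod n, ((w - c).val < r ↔ w.val < r) := by
    intro w
    have h1 := cInterval_mem (by omega : r ≤ n) σ c (σ w)
    have h2 := cInterval_mem (by omega : r ≤ n) σ 0 (σ w)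
    rw [σ.symm_apply_apply] at h1 h2
    rw [h] at h1
    have h3 := h1.symm.trans h2
    simpa using h3
  by_contra hc0
  have hm0 : c.val ≠ 0 := fun h0 => hc0 ((ZMod.val_eq_zero c).mp h0)
  have hmlt : c.val < n := ZMod.val_lt c
  rcases le_or_gt c.val (n - r) with hcase | hcase
  · set w := c + ((r-1 : ℕ) : ZMod n) with hwdef
    have h1 : (w - c).val = r - 1 := by
      have hwc : w - c = ((r-1:ℕ) : ZMod n) := by rw [hwdef]; ring
      rw [hwc, ZMod.val_cast_of_lt (by omega)]
    have h2 : w.val = c.val + (r-1) := by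
      rw [hwdef, ZMod.val_add_of_lt]
      · rw [ZMod.val_cast_of_lt (by omega)]
      · rw [ZMod.val_cast_of_lt (by omega)]; omega
    have h3 := (hw w).mp (by omega)
    omega
  · set w := c + ((n - c.val - 1 : ℕ) : ZMod n) with hwdef
    have h1 : (w - c).val = n - c.val - 1 := by
      have hwc : w - c = ((n - c.val - 1:ℕ) : ZMod n) := by rw [hwdef]; ring
      rw [hwc, ZMod.val_cast_of_lt (by omega)]
    have h2 : w.val = n - 1 := by
      rw [hwdef, ZMod.val_add_of_lt]
      · rw [ZMod.val_cast_of_lt (by omega)]; omega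
      · rw [ZMod.val_cast_of_lt (by omega)]; omega
    have h3 := (hw w).mp (by omega)
    omega



lemma intervalCount_eq_filter (n r : ℕ) (F : Finset (Finset (Fin n)))
    (q : Quotient (rotSetoid n)) :
    intervalCount n r F q = (F.filter (fun A => ∃ σ : ZMod n ≃ Fin n,
      Quotient.mk (rotSetoid n) σ = q ∧ ∃ x : ZMod n, A = cInterval n r σ x)).card := by
  classical
  rw [intervalCount, Nat.card_eq_fintype_card, Fintype.card_subtype]
  have hset : (Finset.univ.filter (fun A : Finset (Fin n) => A ∈ F ∧
      ∃ σ : ZMod n ≃ Fin n, Quotient.mk (rotSetoid n) σ = q ∧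
        ∃ x : ZMod n, A = cInterval n r σ x)) =
      (F.filter (fun A => ∃ σ : ZMod n ≃ Fin n,
        Quotient.mk (rotSetoid n) σ = q ∧ ∃ x : ZMod n, A = cInterval n r σ x)) := by
    ext A
    simp only [Finset.mem_filter, Finset.mem_univ, true_and]
  rw [← hset]

lemma intervalCount_le_r (n r k : ℕ) (hn : 0 < n) (hr1 : 1 ≤ r) (hrn : r < n)
    (hk : 2 ≤ k) (hkL : n + 1 ≤ k * (n - r))
    (F : Finset (Finset (Fin n)))
    (hkw : ∀ f : Fin k → Finset (Fin n), (∀ i, f i ∈ F) → ∃ v, ∀ i, v ∈ f i)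
    (q : Quotient (rotSetoid n)) :
    intervalCount n r F q ≤ r := by
  classical
  haveI : NeZero n := ⟨hn.ne'⟩
  obtain ⟨σ, rfl⟩ := Quotient.exists_rep q
  have hb : (Finset.univ.filter (fun x : ZMod n => cInterval n r σ x ∈ F)).card ≤ r := by
    apply core_circle n r (n - r) k hn hr1 (by omega) hk hkL
    intro f hf
    obtain ⟨v, hv⟩ := hkw (fun i => cInterval n r σ (f i))
      (fun i => (Finset.mem_filter.mp (hf i)).2)
    exact ⟨σ.symm v, fun i => (cInterval_mem (by omega) σ (f i) v).mp (hv i)⟩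
  refine le_trans ?_ hb
  rw [intervalCount]
  rw [show (Finset.univ.filter (fun x : ZMod n => cInterval n r σ x ∈ F)).card
      = Nat.card {x : ZMod n // cInterval n r σ x ∈ F} by
    rw [Nat.card_eq_fintype_card, Fintype.card_subtype]]
  have hex2 : ∀ A : Finset (Fin n), (A ∈ F ∧ ∃ σ' : ZMod n ≃ Fin n,
      Quotient.mk (rotSetoid n) σ' = Quotient.mk (rotSetoid n) σ ∧
        ∃ x : ZMod n, A = cInterval n r σ' x) →
      ∃ x : ZMod n, A = cInterval n r σ x ∧ cInterval n r σ x ∈ F := by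
    rintro A ⟨hAF, σ', hq, x, hx⟩
    obtain ⟨c, hc⟩ := Quotient.exact hq
    refine ⟨x + c, ?_, ?_⟩
    · rw [hx, cInterval_rot σ σ' c hc x]
    · rw [← cInterval_rot σ σ' c hc x, ← hx]
      exact hAF
  set g : {A : Finset (Fin n) // A ∈ F ∧ ∃ σ' : ZMod n ≃ Fin n,
      Quotient.mk (rotSetoid n) σ' = Quotient.mk (rotSetoid n) σ ∧
        ∃ x : ZMod n, A = cInterval n r σ' x} → {x : ZMod n // cInterval n r σ x ∈ F} :=
    fun A => ⟨(hex2 A.1 A.2).choose, (hex2 A.1 A.2).choose_spec.2⟩ with hg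
  have hginj : Function.Injective g := by
    intro A A' hAA
    have h1 := (hex2 A.1 A.2).choose_spec.1
    have h2 := (hex2 A'.1 A'.2).choose_spec.1
    have h3 : (hex2 A.1 A.2).choose = (hex2 A'.1 A'.2).choose := by
      have := congrArg Subtype.val hAA
      simpa [hg] using this
    apply Subtype.ext
    rw [h1, h2, h3]
  exact Nat.card_le_card_of_injective g hginj

lemma classes_per_A (n r : ℕ) (hn : 0 < n) (hr1 : 1 ≤ r) (hrn : r < n)
    (A : Finset (Fin n)) (hA : A.card = r) :
    haveI : NeZero n := ⟨hn.ne'⟩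
    r.factorial * (n - r).factorial ≤
      (Finset.univ.filter (fun q : Quotient (rotSetoid n) =>
        ∃ σ : ZMod n ≃ Fin n, Quotient.mk (rotSetoid n) σ = q ∧
          ∃ x, A = cInterval n r σ x)).card := by
  classical
  haveI : NeZero n := ⟨hn.ne'⟩
  set L := n - r with hLdef
  have hAc : Aᶜ.card = L := by
    rw [Finset.card_compl, hA]
    simp [hLdef]
  let α := A.orderIsoOfFin hA
  let β := Aᶜ.orderIsoOfFin hAc
  let bfun : Equiv.Perm (Fin r) × Equiv.Perm (Fin L) → ZMod n → Fin n := fun uv x =>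
    if h : x.val < r then (α (uv.1 ⟨x.val, h⟩) : Fin n)
    else (β (uv.2 ⟨x.val - r, by have := ZMod.val_lt x; omega⟩) : Fin n)
  have hbij : ∀ uv, Function.Bijective (bfun uv) := by
    intro uv
    rw [Fintype.bijective_iff_injective_and_card]
    refine ⟨?_, by simp [ZMod.card]⟩
    intro x y hxy
    by_cases hx : x.val < r <;> by_cases hy : y.val < r
    · simp only [bfun, dif_pos hx, dif_pos hy] at hxy
      have e1 := α.injective (Subtype.coe_injective hxy)
      have e2 := uv.1.injective e1
      have e3 : x.val = y.val := congrArg Fin.val e2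
      exact zmod_val_inj e3
    · simp only [bfun, dif_pos hx, dif_neg hy] at hxy
      have h1 : (α (uv.1 ⟨x.val, hx⟩) : Fin n) ∈ A := (α (uv.1 ⟨x.val, hx⟩)).2
      have h2 : (α (uv.1 ⟨x.val, hx⟩) : Fin n) ∈ Aᶜ := by
        rw [hxy]
        exact Subtype.coe_prop _
      rw [Finset.mem_compl] at h2
      exact absurd h1 h2
    · simp only [bfun, dif_neg hx, dif_pos hy] at hxy
      have h1 : (α (uv.1 ⟨y.val, hy⟩) : Fin n) ∈ A := (α (uv.1 ⟨y.val, hy⟩)).2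
      have h2 : (α (uv.1 ⟨y.val, hy⟩) : Fin n) ∈ Aᶜ := by
        rw [← hxy]
        exact Subtype.coe_prop _
      rw [Finset.mem_compl] at h2
      exact absurd h1 h2
    · simp only [bfun, dif_neg hx, dif_neg hy] at hxy
      have e1 := β.injective (Subtype.coe_injective hxy)
      have e2 := uv.2.injective e1
      have e3 : x.val - r = y.val - r := congrArg Fin.val e2
      exact zmod_val_inj (by omega)
  let bld : Equiv.Perm (Fin r) × Equiv.Perm (Fin L) → (ZMod n ≃ Fin n) := fun uv =>
    Equiv.ofBijective (bfun uv) (hbij uv)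
  have hbld_apply : ∀ uv x, bld uv x = bfun uv x := fun uv x => rfl
  have hint : ∀ uv, cInterval n r (bld uv) 0 = A := by
    intro uv
    apply Finset.eq_of_subset_of_card_le
    · intro z hz
      unfold cInterval at hz
      rw [Finset.mem_image] at hz
      obtain ⟨i, hi, rfl⟩ := hz
      rw [Finset.mem_range] at hi
      have hval : (0 + (i : ZMod n)).val = i := by
        rw [zero_add, ZMod.val_cast_of_lt (by omega)]
      have hlt : (0 + (i : ZMod n)).val < r := by rw [hval]; exact hi
      rw [hbld_apply]
      simp only [bfun]
      rw [dif_pos hlt]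
      exact Subtype.coe_prop _
    · rw [hA]
      unfold cInterval
      rw [Finset.card_image_of_injOn]
      · simp
      · intro i hi j hj hij
        simp only [Finset.coe_range, Set.mem_Iio] at hi hj
        have h1 := (bld uv).injective hij
        have h2 : ((i:ℕ) : ZMod n).val = ((j:ℕ) : ZMod n).val := by
          rw [add_left_cancel h1]
        rw [ZMod.val_cast_of_lt (by omega), ZMod.val_cast_of_lt (by omega)] at h2
        exact h2
  let Φ : Equiv.Perm (Fin r) × Equiv.Perm (Fin L) →
      {q : Quotient (rotSetoid n) // ∃ σ : ZMod n ≃ Fin n,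
        Quotient.mk (rotSetoid n) σ = q ∧ ∃ x, A = cInterval n r σ x} :=
    fun uv => ⟨Quotient.mk (rotSetoid n) (bld uv), ⟨bld uv, rfl, 0, (hint uv).symm⟩⟩
  have hΦinj : Function.Injective Φ := by
    intro uv uv' hΦ
    have hq : Quotient.mk (rotSetoid n) (bld uv) = Quotient.mk (rotSetoid n) (bld uv') :=
      congrArg Subtype.val hΦ
    obtain ⟨c, hc⟩ := Quotient.exact hq
    have hrot : cInterval n r (bld uv) 0 = cInterval n r (bld uv') (0 + c) :=
      cInterval_rot (bld uv') (bld uv) c hc 0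
    rw [hint uv, zero_add] at hrot
    have hc0 : c = 0 := by
      apply cInterval_start_unique n r hr1 hrn (bld uv')
      rw [← hrot, hint uv']
    subst hc0
    have heq : bld uv = bld uv' := by
      apply Equiv.ext
      intro x
      rw [hc x, add_zero]
    have huv1 : uv.1 = uv'.1 := by
      apply Equiv.ext
      intro i
      have hvx : (((i:ℕ) : ZMod n)).val = (i:ℕ) := ZMod.val_cast_of_lt (by omega)
      have hlt : (((i:ℕ) : ZMod n)).val < r := by rw [hvx]; exact i.isLt
      have h1 : bld uv (((i:ℕ) : ZMod n)) = bld uv' (((i:ℕ) : ZMod n)) := by rw [heq]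
      rw [hbld_apply, hbld_apply] at h1
      simp only [bfun] at h1
      rw [dif_pos hlt, dif_pos hlt] at h1
      have h2 := α.injective (Subtype.coe_injective h1)
      have h3 : (⟨(((i:ℕ) : ZMod n)).val, hlt⟩ : Fin r) = i := Fin.ext hvx
      rw [h3] at h2
      exact h2
    have huv2 : uv.2 = uv'.2 := by
      apply Equiv.ext
      intro j
      have hjL : (j:ℕ) < L := j.isLt
      have hvx : (((r + (j:ℕ) : ℕ) : ZMod n)).val = r + (j:ℕ) := ZMod.val_cast_of_lt (by omega)
      have hlt : ¬ (((r + (j:ℕ) : ℕ) : ZMod n)).val < r := by rw [hvx]; omega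
      have h1 : bld uv (((r + (j:ℕ) : ℕ) : ZMod n)) = bld uv' (((r + (j:ℕ) : ℕ) : ZMod n)) := by
        rw [heq]
      rw [hbld_apply, hbld_apply] at h1
      simp only [bfun] at h1
      rw [dif_neg hlt, dif_neg hlt] at h1
      have h2 := β.injective (Subtype.coe_injective h1)
      have h3 : (⟨(((r + (j:ℕ) : ℕ) : ZMod n)).val - r, by have := ZMod.val_lt (((r + (j:ℕ) : ℕ) : ZMod n)); omega⟩ : Fin L) = j := by
        apply Fin.ext
        simp only [hvx]
        omega
      rw [h3] at h2
      exact h2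
    exact Prod.ext huv1 huv2
  calc r.factorial * L.factorial
      = Fintype.card (Equiv.Perm (Fin r) × Equiv.Perm (Fin L)) := by
        rw [Fintype.card_prod, Fintype.card_perm, Fintype.card_perm, Fintype.card_fin,
          Fintype.card_fin]
    _ ≤ Fintype.card {q : Quotient (rotSetoid n) // ∃ σ : ZMod n ≃ Fin n,
          Quotient.mk (rotSetoid n) σ = q ∧ ∃ x, A = cInterval n r σ x} :=
        Fintype.card_le_of_injective Φ hΦinj
    _ = (Finset.univ.filter (fun q : Quotient (rotSetoid n) =>
          ∃ σ : ZMod n ≃ Fin n, Quotient.mk (rotSetoid n) σ = q ∧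
            ∃ x, A = cInterval n r σ x)).card := Fintype.card_subtype _

lemma card_rotQuot (n : ℕ) (hn : 0 < n) :
    haveI : NeZero n := ⟨hn.ne'⟩
    Fintype.card (Quotient (rotSetoid n)) = (n-1).factorial := by
  classical
  haveI : NeZero n := ⟨hn.ne'⟩
  have h1 : Fintype.card (ZMod n ≃ Fin n) = n.factorial := by
    rw [Fintype.card_equiv (Fintype.equivFinOfCardEq (by simp [ZMod.card]))]
    simp [ZMod.card]
  have h2 : (Finset.univ : Finset (ZMod n ≃ Fin n)).card =
      ∑ q : Quotient (rotSetoid n), (Finset.univ.filter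
        (fun σ : ZMod n ≃ Fin n => Quotient.mk (rotSetoid n) σ = q)).card :=
    Finset.card_eq_sum_card_fiberwise (fun σ _ => Finset.mem_univ _)
  have h3 : ∀ q : Quotient (rotSetoid n), (Finset.univ.filter
      (fun σ : ZMod n ≃ Fin n => Quotient.mk (rotSetoid n) σ = q)).card = n := by
    intro q
    obtain ⟨τ, rfl⟩ := Quotient.exists_rep q
    have hcard : ((Finset.univ : Finset (ZMod n))).card = (Finset.univ.filter
        (fun σ : ZMod n ≃ Fin n => Quotient.mk (rotSetoid n) σ = Quotient.mk (rotSetoid n) τ)).card := by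
      apply Finset.card_bij (fun c _ => (Equiv.addRight c).trans τ)
      · intro c _
        simp only [Finset.mem_filter, Finset.mem_univ, true_and]
        apply Quotient.sound
        exact ⟨c, fun x => rfl⟩
      · intro c _ c' _ h
        have h0 := congrArg (fun e : ZMod n ≃ Fin n => e 0) h
        simp only [Equiv.trans_apply, Equiv.coe_addRight, zero_add] at h0
        exact τ.injective h0
      · intro σ hσ
        simp only [Finset.mem_filter, Finset.mem_univ, true_and] at hσ
        obtain ⟨c, hc⟩ := Quotient.exact hσ
        refine ⟨c, Finset.mem_univ _, ?_⟩
        apply Equiv.ext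
        intro x
        simp only [Equiv.trans_apply, Equiv.coe_addRight]
        exact (hc x).symm
    rw [← hcard, Finset.card_univ, ZMod.card]
  have h4 : n.factorial = Fintype.card (Quotient (rotSetoid n)) * n := by
    rw [← h1, ← Finset.card_univ, h2]
    rw [Finset.sum_congr rfl (fun q _ => h3 q), Finset.sum_const, Finset.card_univ,
      smul_eq_mul]
  have h5 : n.factorial = (n-1).factorial * n := by
    conv_lhs => rw [show n = (n-1)+1 by omega]
    rw [Nat.factorial_succ]
    have : n - 1 + 1 = n := by omega
    rw [this, Nat.mul_comm]
  have h6 := h4.symm.trans h5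
  exact Nat.eq_of_mul_eq_mul_right hn h6

/-- If a `k`-wise intersecting family of `r`-subsets of `[n]` (with `r < (k-1)n/k`) has
size at least `(1-δ) C(n-1, r-1)`, then the number of unsaturated cyclic orders (those in
which fewer than `r` members of `F` are intervals) is at most `r δ (n-1)!`. -/
theorem few_unsaturated_orders (n r k : ℕ) (hk : 2 ≤ k)
    (hr : k * r < (k - 1) * n)
    (F : Finset (Finset (Fin n)))
    (hcard : ∀ A ∈ F, A.card = r)
    (hkw : ∀ f : Fin k → Finset (Fin n), (∀ i, f i ∈ F) → ∃ v, ∀ i, v ∈ f i)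
    (δ : ℝ)
    (hF : ((1 : ℝ) - δ) * ((n - 1).choose (r - 1)) ≤ F.card) :
    (Nat.card {q : Quotient (rotSetoid n) // intervalCount n r F q < r} : ℝ)
      ≤ r * δ * (n - 1).factorial := by
  have hn : 0 < n := by
    rcases Nat.eq_zero_or_pos n with rfl | h
    · simp at hr
    · exact h
  rcases Nat.eq_zero_or_pos r with rfl | hr1
  · haveI : IsEmpty {q : Quotient (rotSetoid n) // intervalCount n 0 F q < 0} :=
      ⟨fun ⟨q, h⟩ => (Nat.not_lt_zero _ h)⟩
    rw [Nat.card_of_isEmpty]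
    simp
  haveI : NeZero n := ⟨hn.ne'⟩
  have h1 : (k-1) * n = k * n - n := by rw [Nat.sub_one_mul]
  have hnk : n ≤ k * n := Nat.le_mul_of_pos_left n (by omega)
  have h2 : k * r + n < k * n := by
    rw [h1] at hr
    omega
  have hrn : r < n := by
    by_contra hcon
    push_neg at hcon
    have : k * n ≤ k * r := Nat.mul_le_mul_left k hcon
    omega
  have h3 : k * (n - r) + k * r = k * n := by
    rw [← Nat.mul_add]
    congr 1
    omega
  have hkL : n + 1 ≤ k * (n - r) := by omega
  set L := n - r with hLdef
  -- per-class bound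
  have hcle : ∀ q : Quotient (rotSetoid n), intervalCount n r F q ≤ r :=
    fun q => intervalCount_le_r n r k hn hr1 hrn hk hkL F hkw q
  -- lower bound on the total count
  have hsum : F.card * (r.factorial * L.factorial) ≤
      ∑ q : Quotient (rotSetoid n), intervalCount n r F q := by
    have e1 : ∑ q : Quotient (rotSetoid n), intervalCount n r F q
        = ∑ q : Quotient (rotSetoid n), ∑ A ∈ F,
            (if ∃ σ : ZMod n ≃ Fin n, Quotient.mk (rotSetoid n) σ = q ∧
              ∃ x, A = cInterval n r σ x then 1 else 0) := by
      refine Finset.sum_congr rfl (fun q _ => ?_)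
      rw [intervalCount_eq_filter, Finset.card_filter]
      exact Finset.sum_congr rfl (fun A _ => by congr)
    rw [e1, Finset.sum_comm]
    have e2 : ∀ A ∈ F, r.factorial * L.factorial ≤
        ∑ q : Quotient (rotSetoid n), (if ∃ σ : ZMod n ≃ Fin n,
          Quotient.mk (rotSetoid n) σ = q ∧ ∃ x, A = cInterval n r σ x then 1 else 0) := by
      intro A hA
      have e3 : ∑ q : Quotient (rotSetoid n), (if ∃ σ : ZMod n ≃ Fin n,
          Quotient.mk (rotSetoid n) σ = q ∧ ∃ x, A = cInterval n r σ x then 1 else 0)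
          = (Finset.univ.filter (fun q : Quotient (rotSetoid n) =>
              ∃ σ : ZMod n ≃ Fin n, Quotient.mk (rotSetoid n) σ = q ∧
                ∃ x, A = cInterval n r σ x)).card := (Finset.card_filter _ _).symm
      rw [e3]
      exact classes_per_A n r hn hr1 hrn A (hcard A hA)
    calc F.card * (r.factorial * L.factorial)
        = ∑ _A ∈ F, r.factorial * L.factorial := by
          rw [Finset.sum_const, smul_eq_mul]
      _ ≤ _ := Finset.sum_le_sum e2
  -- upper bound: sum + U ≤ r * #Q
  set U := (Finset.univ.filter
    (fun q : Quotient (rotSetoid n) => intervalCount n r F q < r)).card with hUdef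
  have hup : (∑ q : Quotient (rotSetoid n), intervalCount n r F q) + U
      ≤ r * Fintype.card (Quotient (rotSetoid n)) := by
    have e1 : (U : ℕ) = ∑ q : Quotient (rotSetoid n),
        (if intervalCount n r F q < r then 1 else 0) := by
      rw [hUdef, Finset.card_filter]
    rw [e1, ← Finset.sum_add_distrib]
    have e2 : ∀ q : Quotient (rotSetoid n),
        intervalCount n r F q + (if intervalCount n r F q < r then 1 else 0) ≤ r := by
      intro q
      have := hcle q
      split <;> omega
    calc ∑ q : Quotient (rotSetoid n),
          (intervalCount n r F q + (if intervalCount n r F q < r then 1 else 0))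
        ≤ ∑ _q : Quotient (rotSetoid n), r := Finset.sum_le_sum (fun q _ => e2 q)
      _ = r * Fintype.card (Quotient (rotSetoid n)) := by
          rw [Finset.sum_const, smul_eq_mul, Finset.card_univ, Nat.mul_comm]
  have hQ : Fintype.card (Quotient (rotSetoid n)) = (n-1).factorial := card_rotQuot n hn
  have hmain : F.card * (r.factorial * L.factorial) + U ≤ r * (n-1).factorial := by
    rw [← hQ]
    omega
  have hNatU : Nat.card {q : Quotient (rotSetoid n) // intervalCount n r F q < r} = U := by
    rw [Nat.card_eq_fintype_card, Fintype.card_subtype]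
  have hchoose : (n-1).choose (r-1) * (r.factorial * L.factorial) = r * (n-1).factorial := by
    have e1 := Nat.choose_mul_factorial_mul_factorial (show r-1 ≤ n-1 by omega)
    have e2 : n - 1 - (r - 1) = L := by omega
    rw [e2] at e1
    have e3 : r.factorial = r * (r-1).factorial := by
      obtain ⟨m, rfl⟩ : ∃ m, r = m + 1 := ⟨r-1, by omega⟩
      simp [Nat.factorial_succ]
    calc (n-1).choose (r-1) * (r.factorial * L.factorial)
        = (n-1).choose (r-1) * ((r * (r-1).factorial) * L.factorial) := by rw [e3]
      _ = r * ((n-1).choose (r-1) * (r-1).factorial * L.factorial) := by ring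
      _ = r * (n-1).factorial := by rw [e1]
  rw [hNatU]
  -- move to the reals
  have hcast1 : (U : ℝ) ≤ (r : ℝ) * (n-1).factorial
      - (F.card : ℝ) * ((r.factorial : ℝ) * (L.factorial : ℝ)) := by
    have := hmain
    have hcast := (Nat.cast_le (α := ℝ)).mpr hmain
    push_cast at hcast
    linarith
  have hFlow : ((1 : ℝ) - δ) * ((n - 1).choose (r - 1)) * ((r.factorial : ℝ) * (L.factorial : ℝ))
      ≤ (F.card : ℝ) * ((r.factorial : ℝ) * (L.factorial : ℝ)) := by
    apply mul_le_mul_of_nonneg_right hF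
    positivity
  have hchooseR : (((n-1).choose (r-1) : ℝ)) * ((r.factorial : ℝ) * (L.factorial : ℝ))
      = (r : ℝ) * ((n-1).factorial : ℝ) := by
    have := congrArg (fun m : ℕ => (m : ℝ)) hchoose
    push_cast at this
    linarith
  calc (U : ℝ) ≤ (r : ℝ) * (n-1).factorial
        - (F.card : ℝ) * ((r.factorial : ℝ) * (L.factorial : ℝ)) := hcast1
    _ ≤ (r : ℝ) * (n-1).factorial
        - ((1 : ℝ) - δ) * ((n - 1).choose (r - 1)) * ((r.factorial : ℝ) * (L.factorial : ℝ)) := by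
          linarith
    _ = (r : ℝ) * (n-1).factorial - ((1 : ℝ) - δ) * ((r : ℝ) * ((n-1).factorial : ℝ)) := by
          rw [mul_assoc, hchooseR]
    _ = r * δ * (n - 1).factorial := by ring
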